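/- Let ζ = exp(2πi/36). Then |ζ⁷ + ζ³ − ζ| = 4·cos(π/9)·cos(2π/9) · |ζ¹¹ − ζ⁷ + ζ⁵ − ζ³ + ζ|. -/

import Mathlib

open Complex Real

/-- For `ζ = e^{2πi/36}`:
`|ζ⁷ + ζ³ − ζ| = 4 cos(π/9) cos(2π/9) · |ζ¹¹ − ζ⁷ + ζ⁵ − ζ³ + ζ|`. -/
theorem stmt13 (ζ : ℂ) (hζ : ζ = Complex.exp (2 * Real.pi * Complex.I / 36)) :
    ‖ζ^7 + ζ^3 - ζ‖ =
      4 * Real.cos (Real.pi / 9) * Real.cos (2 * Real.pi / 9) *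
        ‖ζ^11 - ζ^7 + ζ^5 - ζ^3 + ζ‖ := by
  have hpow : ∀ n : ℕ, ζ ^ n = Complex.exp (n * (2 * Real.pi * Complex.I / 36)) := by
    intro n
    rw [hζ, ← Complex.exp_nat_mul]
  have h18 : ζ ^ 18 = -1 := by
    rw [hpow 18, show ((18 : ℕ) : ℂ) * (2 * (Real.pi : ℂ) * Complex.I / 36)
      = Real.pi * Complex.I by push_cast; ring, Complex.exp_pi_mul_I]
  have h6 : ζ ^ 6 = Complex.exp ((Real.pi / 3 : ℝ) * Complex.I) := by
    rw [hpow 6]; push_cast; ring_nf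
  have h6ne : ζ ^ 6 + 1 ≠ 0 := by
    rw [h6, Complex.exp_mul_I, ← Complex.ofReal_cos, ← Complex.ofReal_sin]
    intro h
    have him := congrArg Complex.im h
    simp at him
  have h12 : ζ ^ 12 = ζ ^ 6 - 1 := by
    have h0 : (ζ ^ 6 + 1) * (ζ ^ 12 - ζ ^ 6 + 1) = 0 := by
      have hfac : (ζ ^ 6 + 1) * (ζ ^ 12 - ζ ^ 6 + 1) = ζ ^ 18 + 1 := by ring
      rw [hfac, h18]; ring
    rcases mul_eq_zero.mp h0 with h | h
    · exact absurd h h6ne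
    · linear_combination h
  have key : ∀ θ : ℝ, Complex.exp (θ * Complex.I) + Complex.exp (-θ * Complex.I)
      = (2 * Real.cos θ : ℝ) := by
    intro θ
    rw [Complex.exp_mul_I, Complex.exp_mul_I]
    push_cast
    simp [Complex.cos_neg, Complex.sin_neg, ← Complex.ofReal_cos, ← Complex.ofReal_sin]
    ring
  have hA : ζ ^ 2 + ζ ^ 34 = (2 * Real.cos (Real.pi / 9) : ℝ) := by
    have e2 : ζ ^ 2 = Complex.exp ((Real.pi / 9 : ℝ) * Complex.I) := by
      rw [hpow 2]; push_cast; ring_nf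
    have e34 : ζ ^ 34 = Complex.exp (-(Real.pi / 9 : ℝ) * Complex.I) := by
      rw [hpow 34]
      rw [show ((34 : ℕ) : ℂ) * (2 * (Real.pi : ℂ) * Complex.I / 36)
          = -(Real.pi / 9 : ℝ) * Complex.I + 2 * Real.pi * Complex.I by push_cast; ring,
        Complex.exp_add, Complex.exp_two_pi_mul_I, mul_one]
    rw [e2, e34, key]
  have hB : ζ ^ 4 + ζ ^ 32 = (2 * Real.cos (2 * Real.pi / 9) : ℝ) := by
    have e4 : ζ ^ 4 = Complex.exp ((2 * Real.pi / 9 : ℝ) * Complex.I) := by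
      rw [hpow 4]; push_cast; ring_nf
    have e32 : ζ ^ 32 = Complex.exp (-(2 * Real.pi / 9 : ℝ) * Complex.I) := by
      rw [hpow 32]
      rw [show ((32 : ℕ) : ℂ) * (2 * (Real.pi : ℂ) * Complex.I / 36)
          = -(2 * Real.pi / 9 : ℝ) * Complex.I + 2 * Real.pi * Complex.I by push_cast; ring,
        Complex.exp_add, Complex.exp_two_pi_mul_I, mul_one]
    rw [e4, e32, key]
  have main : ζ^7 + ζ^3 - ζ
      = (ζ ^ 2 + ζ ^ 34) * (ζ ^ 4 + ζ ^ 32) * (ζ^11 - ζ^7 + ζ^5 - ζ^3 + ζ) := by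
    linear_combination (-((1)*ζ^1 + (-1)*ζ^3 + (1)*ζ^7 + (-2)*ζ^9 + (1)*ζ^11 + (-1)*ζ^13 + (-1)*ζ^15 + (2)*ζ^17 + (-2)*ζ^19 + (1)*ζ^21 + (1)*ζ^23 + (-1)*ζ^25 + (2)*ζ^27 + (-1)*ζ^29 + (1)*ζ^31 + (1)*ζ^33 + (-1)*ζ^35 + (1)*ζ^37 + (1)*ζ^39 + (-2)*ζ^41 + (1)*ζ^43 + (-1)*ζ^47 + (1)*ζ^49 + (-1)*ζ^51 + (1)*ζ^53 + (-1)*ζ^57 + (2)*ζ^59 + (-1)*ζ^61 + (1)*ζ^65)) * h12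
  rw [main, hA, hB, norm_mul, norm_mul, Complex.norm_real, Complex.norm_real,
    Real.norm_eq_abs, Real.norm_eq_abs]
  have c1 : 0 ≤ Real.cos (Real.pi / 9) :=
    Real.cos_nonneg_of_mem_Icc ⟨by nlinarith [Real.pi_pos], by nlinarith [Real.pi_pos]⟩
  have c2 : 0 ≤ Real.cos (2 * Real.pi / 9) :=
    Real.cos_nonneg_of_mem_Icc ⟨by nlinarith [Real.pi_pos], by nlinarith [Real.pi_pos]⟩
  rw [_root_.abs_of_nonneg (show (0:ℝ) ≤ 2 * Real.cos (Real.pi / 9) by linarith),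
    _root_.abs_of_nonneg (show (0:ℝ) ≤ 2 * Real.cos (2 * Real.pi / 9) by linarith)]
  ring
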